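/- Let γ > 0, κ ≥ 1, λ₁ > 0, and let p, q be probability densities with ⟨p^{1+γ}⟩ < ∞ and ⟨q p^γ⟩ < ∞. Then the combined cross-entropy converges, as λ₂ → 0⁺, to a positive constant multiple of the density power cross-entropy: lim_{λ₂→0⁺} d_{(λ₁,λ₂),κ,γ}(q,p) = (κ·λ₁^{κ/(1+γ)−1}/(1+γ))·d^{DP}_γ(q,p). -/

import Mathlib

open MeasureTheory Filter Real Topology Set


theorem dcomb_main (γ κ l1 A B : ℝ) (hγ : 0 < γ) (hκ : 1 ≤ κ) (hl1 : 0 < l1)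
    (hA : 0 ≤ A) (hB : 0 ≤ B) :
    Tendsto (fun l2 : ℝ =>
      κ / (l2 * γ) * (l1 + l2 * A) ^ (κ / (1 + γ)) *
          (1 - 1 / κ - (l1 + l2 * B) / (l1 + l2 * A)) +
        1 / (l2 * γ) * (l1 + l2) ^ (κ / (1 + γ))) (𝓝[>] (0:ℝ))
      (𝓝 (κ * l1 ^ (κ / (1 + γ) - 1) / (1 + γ) *
        (-((1 + γ) / γ) * B + 1 / γ + A))) := by
  have h1γ : (0:ℝ) < 1 + γ := by linarith
  have hκ0 : (0:ℝ) < κ := by linarith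
  set c : ℝ := κ / (1 + γ) with hc
  have hκc : κ = c * (1 + γ) := by rw [hc, div_mul_cancel₀ κ h1γ.ne']
  set F : ℝ → ℝ := fun t =>
    (κ - 1) * (l1 + t * A) ^ c - κ * ((l1 + t * A) ^ (c - 1) * (l1 + t * B))
      + (l1 + t) ^ c with hFdef
  have hg : HasDerivAt (fun t : ℝ => l1 + t * A) A 0 := by
    simpa using ((hasDerivAt_id (0:ℝ)).mul_const A).const_add l1
  have hh : HasDerivAt (fun t : ℝ => l1 + t * B) B 0 := by
    simpa using ((hasDerivAt_id (0:ℝ)).mul_const B).const_add l1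
  have hk : HasDerivAt (fun t : ℝ => l1 + t) 1 0 := by
    simpa using (hasDerivAt_id (0:ℝ)).const_add l1
  have hne : l1 + 0 * A ≠ 0 := by simpa using hl1.ne'
  have hgc : HasDerivAt (fun t : ℝ => (l1 + t * A) ^ c) (A * c * l1 ^ (c - 1)) 0 := by
    simpa using hg.rpow_const (Or.inl hne)
  have hgc1 : HasDerivAt (fun t : ℝ => (l1 + t * A) ^ (c - 1))
      (A * (c - 1) * l1 ^ (c - 1 - 1)) 0 := by
    simpa using hg.rpow_const (Or.inl hne)
  have hkc : HasDerivAt (fun t : ℝ => (l1 + t) ^ c) (1 * c * l1 ^ (c - 1)) 0 := by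
    simpa using hk.rpow_const (Or.inl (by simpa using hl1.ne'))
  set D : ℝ := (κ - 1) * (A * c * l1 ^ (c - 1))
      - κ * (A * (c - 1) * l1 ^ (c - 1 - 1) * l1 + l1 ^ (c - 1) * B)
      + 1 * c * l1 ^ (c - 1) with hDdef
  have hF : HasDerivAt F D 0 := by
    have hprod : HasDerivAt (fun t : ℝ => (l1 + t * A) ^ (c - 1) * (l1 + t * B))
        (A * (c - 1) * l1 ^ (c - 1 - 1) * (l1 + 0 * B) + (l1 + 0 * A) ^ (c - 1) * B) 0 :=
      hgc1.mul hh
    have := ((hgc.const_mul (κ - 1)).sub (hprod.const_mul κ)).add hkc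
    convert this using 1
    all_goals try rfl
    simp [hDdef]
  -- F 0 = 0
  have hl1c : l1 ^ (c - 1) * l1 = l1 ^ c := by
    rw [← Real.rpow_add_one hl1.ne']; ring_nf
  have hF0 : F 0 = 0 := by
    simp only [hFdef, zero_mul, add_zero]
    nlinarith [hl1c]
  have hslope : Tendsto (slope F 0) (𝓝[>] (0:ℝ)) (𝓝 D) := by
    have := hasDerivAt_iff_tendsto_slope.mp hF
    exact this.mono_left (nhdsWithin_mono 0 (fun x hx => ne_of_gt hx))
  have htend : Tendsto (fun t => slope F 0 t / γ) (𝓝[>] (0:ℝ)) (𝓝 (D / γ)) :=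
    hslope.div_const γ
  have heq : ∀ᶠ t in 𝓝[>] (0:ℝ), slope F 0 t / γ =
      κ / (t * γ) * (l1 + t * A) ^ c * (1 - 1 / κ - (l1 + t * B) / (l1 + t * A)) +
        1 / (t * γ) * (l1 + t) ^ c := by
    filter_upwards [self_mem_nhdsWithin] with t ht
    have ht0 : 0 < t := ht
    have hgA : 0 < l1 + t * A := by positivity
    have hrp : (l1 + t * A) ^ (c - 1) = (l1 + t * A) ^ c / (l1 + t * A) := by
      rw [Real.rpow_sub hgA, Real.rpow_one]
    rw [slope_def_field, hF0]
    simp only [hFdef, sub_zero]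
    rw [hrp]
    field_simp
  have hDT : κ * l1 ^ (c - 1) / (1 + γ) * (-((1 + γ) / γ) * B + 1 / γ + A) = D / γ := by
    have hl1c2 : l1 ^ (c - 1 - 1) * l1 = l1 ^ (c - 1) := by
      rw [← Real.rpow_add_one hl1.ne']; ring_nf
    have hsub : A * (c - 1) * l1 ^ (c - 1 - 1) * l1 = A * (c - 1) * l1 ^ (c - 1) := by
      rw [mul_assoc, hl1c2]
    rw [hDdef, hsub, hκc]
    field_simp
    ring
  rw [hDT]
  exact htend.congr' heq


/-- A probability density w.r.t. a measure `ν`: measurable, nonnegative, integrating to 1. -/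
def IsProbDensity {X : Type*} [MeasurableSpace X] (ν : Measure X) (p : X → ℝ) : Prop :=
  Measurable p ∧ (∀ x, 0 ≤ p x) ∧ ∫ x, p x ∂ν = 1

/-- `⟨f^{1+γ}⟩ = ∫ f(x)^{1+γ} dν`. -/
noncomputable def powInt {X : Type*} [MeasurableSpace X] (ν : Measure X) (γ : ℝ) (p : X → ℝ) : ℝ :=
  ∫ x, p x ^ (1 + γ) ∂ν

/-- `⟨q p^γ⟩ = ∫ q(x) p(x)^γ dν`. -/
noncomputable def crossInt {X : Type*} [MeasurableSpace X] (ν : Measure X) (γ : ℝ)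
    (q p : X → ℝ) : ℝ :=
  ∫ x, q x * p x ^ γ ∂ν

/-- `‖f‖_{1+γ} = ⟨f^{1+γ}⟩^{1/(1+γ)}`. -/
noncomputable def lnorm {X : Type*} [MeasurableSpace X] (ν : Measure X) (γ : ℝ) (p : X → ℝ) : ℝ :=
  (powInt ν γ p) ^ (1 / (1 + γ))

/-- The combined cross-entropy (connecting the Bregman–Hölder and bridge density power
families): `d_{(λ₁,λ₂),κ,γ}(q,p) = (κ/(λ₂γ))(λ₁+λ₂⟨p^{1+γ}⟩)^{κ/(1+γ)}
  [1 − 1/κ − (λ₁+λ₂⟨q p^γ⟩)/(λ₁+λ₂⟨p^{1+γ}⟩)] + (1/(λ₂γ))(λ₁+λ₂)^{κ/(1+γ)}`. -/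
noncomputable def dComb {X : Type*} [MeasurableSpace X] (ν : Measure X) (l1 l2 κ γ : ℝ)
    (q p : X → ℝ) : ℝ :=
  κ / (l2 * γ) * (l1 + l2 * powInt ν γ p) ^ (κ / (1 + γ)) *
      (1 - 1 / κ - (l1 + l2 * crossInt ν γ q p) / (l1 + l2 * powInt ν γ p)) +
    1 / (l2 * γ) * (l1 + l2) ^ (κ / (1 + γ))


/-- The density power cross-entropy (DPCE). -/
noncomputable def dDP {X : Type*} [MeasurableSpace X] (ν : Measure X) (γ : ℝ)
    (q p : X → ℝ) : ℝ :=
  -((1 + γ) / γ) * crossInt ν γ q p + 1 / γ + powInt ν γ p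

/-- as `λ₂ → 0⁺`, the combined cross-entropy converges to a positive constant
multiple of the density power cross-entropy. -/
theorem dcomb_tendsto_dpce {X : Type*} [MeasurableSpace X] (ν : Measure X)
    [SigmaFinite ν] (γ κ l1 : ℝ) (hγ : 0 < γ) (hκ : 1 ≤ κ) (hl1 : 0 < l1)
    (p q : X → ℝ) (hp : IsProbDensity ν p) (hq : IsProbDensity ν q)
    (hpI : Integrable (fun x => p x ^ (1 + γ)) ν)
    (hqpI : Integrable (fun x => q x * p x ^ γ) ν) :
    Tendsto (fun l2 => dComb ν l1 l2 κ γ q p) (𝓝[>] (0:ℝ))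
      (𝓝 (κ * l1 ^ (κ / (1 + γ) - 1) / (1 + γ) * dDP ν γ q p)) := by
  have hA : 0 ≤ powInt ν γ p :=
    integral_nonneg fun x => Real.rpow_nonneg (hp.2.1 x) _
  have hB : 0 ≤ crossInt ν γ q p :=
    integral_nonneg fun x => mul_nonneg (hq.2.1 x) (Real.rpow_nonneg (hp.2.1 x) _)
  simpa [dComb, dDP] using
    dcomb_main γ κ l1 (powInt ν γ p) (crossInt ν γ q p) hγ hκ hl1 hA hB
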